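/- Let μ be a probability measure on ℕ = {1,2,...} with generating function g(r) = Σ_k μ({k}) r^k, and suppose g(r) = exp(−βΦ(r)) = (exp(−β₀Φ(r)))^{β/β₀} where exp(−β₀Φ(·)) is itself the generating function of a probability measure μ₀ on ℕ with μ₀({1}) > 0, and Φ(r) → ∞ as r ↓ 0. Then β/β₀ ∈ ℕ. (I.e. the rate of decay of a QSD of an explosive DSBP must be an integer multiple of β₀.) -/
import Mathlib

open Set Filter

private lemma tendsto_log_gen (μ : ℕ → ℝ) (hnn : ∀ k, 0 ≤ μ k) (hsum : ∑' k, μ k = 1)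
    (m : ℕ) (hm : 0 < μ m) (hlow : ∀ k, k < m → μ k = 0) :
    Tendsto (fun r => Real.log (∑' k, μ k * r ^ k) - m * Real.log r)
      (nhdsWithin 0 (Set.Ioi 0)) (nhds (Real.log (μ m))) := by
  have hS : Summable μ := by
    by_contra h
    rw [tsum_eq_zero_of_not_summable h] at hsum; norm_num at hsum
  have hmem : Set.Ioo (0:ℝ) 1 ∈ nhdsWithin (0:ℝ) (Set.Ioi 0) :=
    Ioo_mem_nhdsGT_of_mem (by constructor <;> norm_num)
  -- summability and bounds for r ∈ Ioo 0 1
  have key : ∀ r ∈ Set.Ioo (0:ℝ) 1,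
      μ m * r ^ m ≤ (∑' k, μ k * r ^ k) ∧ (∑' k, μ k * r ^ k) ≤ μ m * r ^ m + r ^ (m+1) := by
    intro r hr
    have hr0 : 0 < r := hr.1
    have hr1 : r ≤ 1 := hr.2.le
    have hSr : Summable (fun k => μ k * r ^ k) := by
      apply hS.of_nonneg_of_le (fun k => mul_nonneg (hnn k) (pow_nonneg hr0.le k))
      intro k
      exact mul_le_of_le_one_right (hnn k) (pow_le_one₀ hr0.le hr1)
    constructor
    · exact Summable.le_tsum hSr m (fun j _ => mul_nonneg (hnn j) (pow_nonneg hr0.le j))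
    · rw [Summable.tsum_eq_add_tsum_ite hSr m]
      gcongr
      have hSup : Summable (fun k => μ k * r ^ (m+1)) := hS.mul_right _
      calc (∑' k, if k = m then 0 else μ k * r ^ k)
          ≤ ∑' k, μ k * r ^ (m+1) := by
            apply Summable.tsum_le_tsum _ _ hSup
            · intro k
              by_cases hk : k = m
              · simp only [hk, if_true]
                exact mul_nonneg (hnn m) (pow_nonneg hr0.le _)
              · simp only [hk, if_false]
                rcases lt_trichotomy k m with h | h | h
                · rw [hlow k h]; simp
                · exact absurd h hk
                · exact mul_le_mul_of_nonneg_left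
                    (pow_le_pow_of_le_one hr0.le hr1 h) (hnn k)
            · apply hSup.of_nonneg_of_le
              · intro k
                by_cases hk : k = m
                · simp only [hk, if_true, le_refl]
                · simp only [hk, if_false]
                  exact mul_nonneg (hnn k) (pow_nonneg hr0.le _)
              · intro k
                by_cases hk : k = m
                · simp only [hk, if_true]
                  exact mul_nonneg (hnn m) (pow_nonneg hr0.le _)
                · simp only [hk, if_false]
                  rcases lt_trichotomy k m with h | h | h
                  · rw [hlow k h]; simp
                  · exact absurd h hk
                  · exact mul_le_mul_of_nonneg_left
                      (pow_le_pow_of_le_one hr0.le hr1 h) (hnn k)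
        _ = r ^ (m+1) := by rw [tsum_mul_right, hsum, one_mul]
  -- the ratio tends to μ m
  have hratio : Tendsto (fun r => (∑' k, μ k * r ^ k) / r ^ m)
      (nhdsWithin 0 (Set.Ioi 0)) (nhds (μ m)) := by
    have h1 : Tendsto (fun r : ℝ => μ m + r) (nhdsWithin 0 (Set.Ioi 0)) (nhds (μ m)) := by
      have h0 : Tendsto (fun r : ℝ => μ m + r) (nhds 0) (nhds (μ m + 0)) :=
        (continuous_const.add continuous_id).tendsto (0:ℝ)
      rw [add_zero] at h0
      exact h0.mono_left nhdsWithin_le_nhds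
    refine tendsto_of_tendsto_of_tendsto_of_le_of_le' tendsto_const_nhds h1 ?_ ?_
    · filter_upwards [hmem] with r hr
      have hr0 : 0 < r := hr.1
      have := (key r hr).1
      rw [le_div_iff₀ (by positivity)]
      linarith
    · filter_upwards [hmem] with r hr
      have hr0 : 0 < r := hr.1
      have := (key r hr).2
      rw [div_le_iff₀ (by positivity)]
      calc (∑' k, μ k * r ^ k) ≤ μ m * r ^ m + r ^ (m+1) := this
        _ = (μ m + r) * r ^ m := by ring
  have hlog : Tendsto (fun r => Real.log ((∑' k, μ k * r ^ k) / r ^ m))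
      (nhdsWithin 0 (Set.Ioi 0)) (nhds (Real.log (μ m))) :=
    ((Real.continuousAt_log hm.ne').tendsto.comp hratio)
  apply hlog.congr'
  filter_upwards [hmem] with r hr
  have hr0 : 0 < r := hr.1
  have hgpos : 0 < ∑' k, μ k * r ^ k :=
    lt_of_lt_of_le (by positivity) (key r hr).1
  rw [Real.log_div hgpos.ne' (by positivity), Real.log_pow]

theorem rate_of_decay_integer_multiple (β β₀ : ℝ) (hβ : 0 < β) (hβ₀ : 0 < β₀)
    (Φ : ℝ → ℝ) (hΦ1 : Φ 1 = 0) (hΦnn : ∀ r ∈ Set.Ioc (0:ℝ) 1, 0 ≤ Φ r)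
    (hΦ0 : Tendsto Φ (nhdsWithin 0 (Set.Ioi 0)) atTop)
    (μ μ₀ : ℕ → ℝ)
    (hμnn : ∀ k, 0 ≤ μ k) (hμ0 : μ 0 = 0) (hμsum : ∑' k, μ k = 1)
    (hμ₀nn : ∀ k, 0 ≤ μ₀ k) (hμ₀0 : μ₀ 0 = 0) (hμ₀sum : ∑' k, μ₀ k = 1)
    (hμ₀1 : 0 < μ₀ 1)
    (hg₀ : ∀ r ∈ Set.Ioc (0:ℝ) 1, ∑' k, μ₀ k * r ^ k = Real.exp (-(β₀ * Φ r)))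
    (hg : ∀ r ∈ Set.Ioc (0:ℝ) 1, ∑' k, μ k * r ^ k = Real.exp (-(β * Φ r))) :
    ∃ n : ℕ, 0 < n ∧ β = n * β₀ := by
  -- find the minimal support point of μ
  have hex : ∃ k, μ k ≠ 0 := by
    by_contra h
    push_neg at h
    simp only [h, tsum_zero] at hμsum
    norm_num at hμsum
  classical
  let m := Nat.find hex
  have hmne : μ m ≠ 0 := Nat.find_spec hex
  have hmpos : 0 < μ m := (hμnn m).lt_of_ne' hmne
  have hlow : ∀ k, k < m → μ k = 0 := fun k hk => by
    by_contra h; exact Nat.find_min hex hk h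
  have hm0 : 0 < m := by
    rcases Nat.eq_zero_or_pos m with h | h
    · exact absurd (h ▸ hμ0) hmne
    · exact h
  set θ : ℝ := β / β₀ with hθ
  have hθβ : θ * β₀ = β := div_mul_cancel₀ β hβ₀.ne'
  have hmem : Set.Ioo (0:ℝ) 1 ∈ nhdsWithin (0:ℝ) (Set.Ioi 0) :=
    Ioo_mem_nhdsGT_of_mem (by constructor <;> norm_num)
  have hF : Tendsto (fun r => Real.log (∑' k, μ k * r ^ k) - m * Real.log r)
      (nhdsWithin 0 (Set.Ioi 0)) (nhds (Real.log (μ m))) :=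
    tendsto_log_gen μ hμnn hμsum m hmpos hlow
  have hF₀ : Tendsto (fun r => Real.log (∑' k, μ₀ k * r ^ k) - (1:ℕ) * Real.log r)
      (nhdsWithin 0 (Set.Ioi 0)) (nhds (Real.log (μ₀ 1))) :=
    tendsto_log_gen μ₀ hμ₀nn hμ₀sum 1 hμ₀1 (fun k hk => by interval_cases k; exact hμ₀0)
  have hcomb : Tendsto (fun r => (Real.log (∑' k, μ k * r ^ k) - m * Real.log r)
        - θ * (Real.log (∑' k, μ₀ k * r ^ k) - (1:ℕ) * Real.log r))
      (nhdsWithin 0 (Set.Ioi 0)) (nhds (Real.log (μ m) - θ * Real.log (μ₀ 1))) :=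
    hF.sub (hF₀.const_mul θ)
  have heq : Tendsto (fun r => (θ - m) * Real.log r)
      (nhdsWithin 0 (Set.Ioi 0)) (nhds (Real.log (μ m) - θ * Real.log (μ₀ 1))) := by
    apply hcomb.congr'
    filter_upwards [hmem] with r hr
    have hrIoc : r ∈ Set.Ioc (0:ℝ) 1 := ⟨hr.1, hr.2.le⟩
    rw [hg r hrIoc, hg₀ r hrIoc, Real.log_exp, Real.log_exp, ← hθβ]
    push_cast
    ring
  have hlogB : Tendsto Real.log (nhdsWithin (0:ℝ) (Set.Ioi 0)) atBot :=
    Real.tendsto_log_nhdsGT_zero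
  have hθm : θ = m := by
    rcases lt_trichotomy θ (m:ℝ) with h | h | h
    · exfalso
      have : Tendsto (fun r => (θ - m) * Real.log r) (nhdsWithin (0:ℝ) (Set.Ioi 0)) atTop :=
        (tendsto_const_mul_atTop_of_neg (by linarith)).2 hlogB
      exact not_tendsto_nhds_of_tendsto_atTop this _ heq
    · exact h
    · exfalso
      have : Tendsto (fun r => (θ - m) * Real.log r) (nhdsWithin (0:ℝ) (Set.Ioi 0)) atBot :=
        (tendsto_const_mul_atBot_of_pos (by linarith)).2 hlogB
      exact not_tendsto_nhds_of_tendsto_atBot this _ heq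
  refine ⟨m, hm0, ?_⟩
  rw [← hθβ, hθm]
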